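/- (Reconstruction property) In the setting of the greedy selection map c of the previous statement, suppose additionally that a synthesis map L assigns to each finite list T a decision L(T), and define A(D) = L(c(D)) where c(D) is the training list produced by the greedy run on D. Then A(c(D)) = A(D), i.e., running the full procedure on only the compressed multiset c(D) reconstructs the same decision as running it on all of D. -/
import Mathlib


/-- One run of the greedy selection meta-algorithm: `GreedyRun lt D T T'` means that,
starting from the current training multiset `T`, the greedy loop on dataset `D`
terminates with output `T'` (see the preference-property statement). -/
inductive GreedyRun {𝒵 : Type*} [DecidableEq 𝒵]
    (lt : Multiset 𝒵 → Option 𝒵 → Option 𝒵 → Prop)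
    (D : Multiset 𝒵) : Multiset 𝒵 → Multiset 𝒵 → Prop
  | done (T : Multiset 𝒵) (hstop : ∀ z ∈ D - T, ¬ lt T none (some z)) :
      GreedyRun lt D T T
  | step (T : Multiset 𝒵) (z : 𝒵) (T' : Multiset 𝒵)
      (hcond : ∃ y ∈ D - T, lt T none (some y))
      (hmem : z ∈ D - T)
      (hmax : ∀ y ∈ D - T, y ≠ z → lt T (some y) (some z))
      (hrest : GreedyRun lt D (z ::ₘ T) T') :
      GreedyRun lt D T T'

lemma greedy_mono {𝒵 : Type*} [DecidableEq 𝒵]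
    {lt : Multiset 𝒵 → Option 𝒵 → Option 𝒵 → Prop}
    {D U T : Multiset 𝒵} (h : GreedyRun lt D U T) : U ≤ T := by
  induction h with
  | done => exact le_refl _
  | step U z T' _ _ _ _ ih => exact le_trans (Multiset.le_cons_self _ _) ih

lemma greedy_le {𝒵 : Type*} [DecidableEq 𝒵]
    {lt : Multiset 𝒵 → Option 𝒵 → Option 𝒵 → Prop}
    {D U T : Multiset 𝒵} (h : GreedyRun lt D U T) (hU : U ≤ D) : T ≤ D := by
  induction h with
  | done => exact hU
  | step U z T' hcond hmem hmax hrest ih =>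
      apply ih
      rw [Multiset.le_iff_count] at hU ⊢
      intro a
      rcases eq_or_ne a z with rfl | hne
      · have := Multiset.count_pos.mpr hmem
        rw [Multiset.count_sub] at this
        rw [Multiset.count_cons_self]
        omega
      · rw [Multiset.count_cons_of_ne hne]; exact hU a

lemma greedy_det {𝒵 : Type*} [DecidableEq 𝒵]
    {lt : Multiset 𝒵 → Option 𝒵 → Option 𝒵 → Prop}
    (hirrefl : ∀ (T : Multiset 𝒵) (a : Option 𝒵), ¬ lt T a a)
    (htrans : ∀ (T : Multiset 𝒵) (a b c : Option 𝒵), lt T a b → lt T b c → lt T a c)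
    {D U X Y : Multiset 𝒵} (h1 : GreedyRun lt D U X) (h2 : GreedyRun lt D U Y) :
    X = Y := by
  induction h1 generalizing Y with
  | done U hstop =>
      cases h2 with
      | done => rfl
      | step _ z Y hcond hmem hmax hrest =>
          obtain ⟨y, hy, hly⟩ := hcond
          exact absurd hly (hstop y hy)
  | step U z X hcond hmem hmax hrest ih =>
      cases h2 with
      | done _ hstop =>
          obtain ⟨y, hy, hly⟩ := hcond
          exact absurd hly (hstop y hy)
      | step _ z' Y hcond' hmem' hmax' hrest' =>
          have hzz : z = z' := by
            by_contra hne
            exact hirrefl U (some z)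
              (htrans U _ _ _ (hmax' z hmem hne) (hmax z' hmem' (Ne.symm hne)))
          subst hzz
          exact ih hrest'

lemma greedy_replay {𝒵 : Type*} [DecidableEq 𝒵]
    {lt : Multiset 𝒵 → Option 𝒵 → Option 𝒵 → Prop}
    (htrans : ∀ (T : Multiset 𝒵) (a b c : Option 𝒵), lt T a b → lt T b c → lt T a c)
    {D U T : Multiset 𝒵} (h : GreedyRun lt D U T) (hTD : T ≤ D) :
    GreedyRun lt T U T := by
  induction h with
  | done U hstop =>
      exact GreedyRun.done U (by simp)
  | step U z T hcond hmem hmax hrest ih =>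
      have hsub : T - U ≤ D - U := tsub_le_tsub_right hTD U
      have hzT : z ∈ T - U := by
        have hle : z ::ₘ U ≤ T := greedy_mono hrest
        rw [Multiset.le_iff_count] at hle
        have := hle z
        rw [Multiset.count_cons_self] at this
        rw [← Multiset.count_pos, Multiset.count_sub]
        omega
      have hltz : lt U none (some z) := by
        obtain ⟨y, hy, hly⟩ := hcond
        rcases eq_or_ne y z with rfl | hne
        · exact hly
        · exact htrans U _ _ _ hly (hmax y hy hne)
      exact GreedyRun.step U z T ⟨z, hzT, hltz⟩ hzT
        (fun y hy hne => hmax y (Multiset.mem_of_le hsub hy) hne) (ih hTD)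

/-- Reconstruction property: with `A(D) = L(c(D))`, running the full procedure on only
the compressed multiset `c(D)` reconstructs the same decision: `A(c(D)) = A(D)`.
Formally, if the greedy run on `D` outputs `T` (so `c(D) = T`) and the greedy run on `T`
outputs `T'` (so `c(c(D)) = T'`), then `L T' = L T`. -/
theorem greedy_reconstruction {𝒵 ℋ : Type*} [DecidableEq 𝒵]
    (lt : Multiset 𝒵 → Option 𝒵 → Option 𝒵 → Prop)
    (hirrefl : ∀ (T : Multiset 𝒵) (a : Option 𝒵), ¬ lt T a a)
    (htrans : ∀ (T : Multiset 𝒵) (a b c : Option 𝒵), lt T a b → lt T b c → lt T a c)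
    (htrichot : ∀ (T : Multiset 𝒵) (a b : Option 𝒵), lt T a b ∨ a = b ∨ lt T b a)
    (L : Multiset 𝒵 → ℋ)
    (D T T' : Multiset 𝒵)
    (hrunD : GreedyRun lt D 0 T)
    (hrunT : GreedyRun lt T 0 T') :
    L T' = L T := by
  have hTD : T ≤ D := greedy_le hrunD (Multiset.zero_le D)
  have hreplay : GreedyRun lt T 0 T := greedy_replay htrans hrunD hTD
  rw [greedy_det hirrefl htrans hrunT hreplay]
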